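/- arXiv:2111.01736 — 3 statements merged into one kernel-verified Lean document; each statement's English description precedes it below -/
import Mathlib

section
/- Let p > 0, E > 0 and 0 < δ ≤ E. Let g, g_δ ∈ L²(ℝ, ℂ) satisfy ‖g − g_δ‖_{L²} ≤ δ. Let f ∈ L²(ℝ, ℂ) be the exact source, related to g through the Fourier transform by 𝓕f(ξ) = ξ²/(1 − e^{−ξ}) · 𝓕g(ξ) for a.e. ξ, and suppose f satisfies the a priori Sobolev bound (∫_ℝ |𝓕f(ξ)|² (1 + ξ²)^p dξ)^{1/2} ≤ E. Choose the regularization parameter μ = (δ/E)^{1/(p+2)} and let f_{δ,μ} ∈ L²(ℝ, ℂ) be the regularized solution determined by 𝓕f_{δ,μ}(ξ) = ξ²/((1 − e^{−ξ})(1 + ξ²μ²)) · 𝓕g_δ(ξ) for a.e. ξ. Then ‖f − f_{δ,μ}‖_{L²} ≤ 2 δ^{p/(p+2)} E^{2/(p+2)} (1 + (1/2) max{1, μ^{2−p}}). -/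
open MeasureTheory ENNReal
open MeasureTheory ENNReal

lemma aux_q_bound (μ ξ : ℝ) (hμ0 : 0 < μ) (hμ1 : μ ≤ 1) :
    |ξ ^ 2 / ((1 - Real.exp (-ξ)) * (1 + ξ ^ 2 * μ ^ 2))| ≤ 3 / (2 * μ ^ 2) := by
  have hd : (0:ℝ) < 1 + ξ ^ 2 * μ ^ 2 := by positivity
  have hμ2 : (0:ℝ) < 2 * μ ^ 2 := by positivity
  rcases lt_trichotomy ξ 0 with hξ | hξ | hξ
  · -- ξ < 0 : e := 1 - exp(-ξ) < 0
    have hex : -ξ + 1 ≤ Real.exp (-ξ) := Real.add_one_le_exp _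
    have he : 1 - Real.exp (-ξ) < 0 := by nlinarith
    have h1 : ξ ^ 2 / ((1 - Real.exp (-ξ)) * (1 + ξ ^ 2 * μ ^ 2)) ≤ 0 := by
      apply div_nonpos_of_nonneg_of_nonpos (by positivity)
      exact mul_nonpos_of_nonpos_of_nonneg he.le hd.le
    have heq : -(ξ ^ 2 / ((1 - Real.exp (-ξ)) * (1 + ξ ^ 2 * μ ^ 2)))
        = ξ ^ 2 / ((Real.exp (-ξ) - 1) * (1 + ξ ^ 2 * μ ^ 2)) := by
      rw [← div_neg]
      congr 1
      ring
    rw [abs_of_nonpos h1, heq, div_le_div_iff₀ (by nlinarith) hμ2]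
    have key : ξ ^ 2 * (2 * μ ^ 2) ≤ 3 * ((-ξ) * (1 + ξ ^ 2 * μ ^ 2)) := by
      nlinarith [mul_nonneg (neg_nonneg.2 hξ.le) (sq_nonneg (ξ * μ + 1)), sq_nonneg (ξ*μ), mul_nonneg (mul_nonneg (neg_nonneg.2 hξ.le) (sq_nonneg ξ)) (mul_nonneg (sq_nonneg μ) (sub_nonneg.2 hμ1))]
    have h2 : (-ξ) * (1 + ξ ^ 2 * μ ^ 2) ≤ (Real.exp (-ξ) - 1) * (1 + ξ ^ 2 * μ ^ 2) := by
      apply mul_le_mul_of_nonneg_right (by linarith) hd.le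
    linarith
  · simp [hξ]; positivity
  · -- ξ > 0
    have hex : ξ + 1 ≤ Real.exp ξ := Real.add_one_le_exp _
    have h1ξ : (0:ℝ) < 1 + ξ := by linarith
    have hexp : Real.exp (-ξ) ≤ 1 / (1 + ξ) := by
      rw [Real.exp_neg, inv_le_comm₀ (Real.exp_pos ξ) (by positivity), inv_div, div_one]
      linarith
    have he : 0 < 1 - Real.exp (-ξ) := by
      have : Real.exp (-ξ) < 1 := by
        rw [Real.exp_lt_one_iff]; linarith
      linarith
    have he2 : ξ ≤ (1 - Real.exp (-ξ)) * (1 + ξ) := by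
      rw [le_div_iff₀ h1ξ] at hexp
      nlinarith
    rw [abs_of_nonneg (by positivity), div_le_div_iff₀ (by positivity) hμ2]
    have key : (ξ ^ 2 * (2 * μ ^ 2)) * (1 + ξ) ≤ (3 * (ξ * (1 + ξ ^ 2 * μ ^ 2))) := by
      nlinarith [mul_nonneg hξ.le (sq_nonneg (ξ * μ - 1)), mul_nonneg (mul_nonneg (sq_nonneg ξ) hμ0.le) (sub_nonneg.2 hμ1), mul_nonneg (mul_nonneg (mul_nonneg (sq_nonneg ξ) hμ0.le) (sub_nonneg.2 hμ1)) hξ.le]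
    have h2 : ξ * (1 + ξ ^ 2 * μ ^ 2) ≤ ((1 - Real.exp (-ξ)) * (1 + ξ)) * (1 + ξ ^ 2 * μ ^ 2) :=
      mul_le_mul_of_nonneg_right he2 hd.le
    rw [← mul_le_mul_iff_of_pos_right h1ξ]
    calc ξ ^ 2 * (2 * μ ^ 2) * (1 + ξ) ≤ 3 * (ξ * (1 + ξ ^ 2 * μ ^ 2)) := key
    _ ≤ 3 * ((1 - Real.exp (-ξ)) * (1 + ξ) * (1 + ξ ^ 2 * μ ^ 2)) := by linarith
    _ = 3 * ((1 - Real.exp (-ξ)) * (1 + ξ ^ 2 * μ ^ 2)) * (1 + ξ) := by ring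

lemma aux_c_bound (p μ ξ : ℝ) (hp : 0 < p) (hμ0 : 0 < μ) (hμ1 : μ ≤ 1) :
    ξ ^ 2 * μ ^ 2 / (1 + ξ ^ 2 * μ ^ 2) ≤
      (μ ^ p * max 1 (μ ^ (2 - p))) * (1 + ξ ^ 2) ^ (p / 2) := by
  set t := ξ ^ 2 with htdef
  have ht : 0 ≤ t := sq_nonneg ξ
  have htμ2 : 0 ≤ t * μ ^ 2 := by positivity
  have hd : (0:ℝ) < 1 + t * μ ^ 2 := by linarith
  have hs1 : (1:ℝ) ≤ 1 + t := by linarith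
  have hsp : (1:ℝ) ≤ (1 + t) ^ (p / 2) := Real.one_le_rpow hs1 (by positivity)
  have hc1 : t * μ ^ 2 / (1 + t * μ ^ 2) ≤ 1 := (div_le_one hd).2 (by linarith)
  have hc2 : t * μ ^ 2 / (1 + t * μ ^ 2) ≤ t * μ ^ 2 :=
    div_le_self (by positivity) (by linarith)
  have hμp : (0:ℝ) ≤ μ ^ p := Real.rpow_nonneg hμ0.le p
  have hμ2r : μ ^ ((2:ℝ)) = μ ^ (2:ℕ) := by
    rw [← Real.rpow_natCast μ 2]; norm_num
  rcases le_or_gt p 2 with hp2 | hp2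
  · -- p ≤ 2
    have main : t * μ ^ 2 / (1 + t * μ ^ 2) ≤ μ ^ p * (1 + t) ^ (p / 2) := by
      rcases le_or_gt (t * μ ^ 2) 1 with htμ | htμ
      · rcases eq_or_lt_of_le ht with ht0 | ht0
        · rw [← ht0]; simp; positivity
        · have htb : t ≤ (μ ^ 2)⁻¹ := by
            rw [show ((μ:ℝ) ^ 2)⁻¹ = 1 / μ ^ 2 by ring, le_div_iff₀ (by positivity)]
            exact htμ
          have e1 : t ^ ((2 - p) / 2) ≤ ((μ ^ 2)⁻¹) ^ ((2 - p) / 2) :=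
            Real.rpow_le_rpow ht htb (by linarith)
          have e2 : (((μ:ℝ) ^ 2)⁻¹) ^ ((2 - p) / 2) = μ ^ (p - 2) := by
            rw [← hμ2r, ← Real.rpow_neg hμ0.le, ← Real.rpow_mul hμ0.le]
            congr 1; ring
          have e12 : t ^ ((2 - p) / 2) ≤ μ ^ (p - 2) := e1.trans_eq e2
          have e3 : t = t ^ ((2 - p) / 2) * t ^ (p / 2) := by
            rw [← Real.rpow_add ht0, show (2 - p) / 2 + p / 2 = 1 by ring, Real.rpow_one]
          have e4 : μ ^ (p - 2) * μ ^ (2:ℕ) = μ ^ p := by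
            rw [← hμ2r, ← Real.rpow_add hμ0]; norm_num
          have htp : (0:ℝ) ≤ t ^ (p / 2) := Real.rpow_nonneg ht _
          have key : t * μ ^ 2 ≤ μ ^ p * t ^ (p / 2) := by
            calc t * μ ^ 2 = t ^ ((2 - p) / 2) * t ^ (p / 2) * μ ^ 2 := by rw [← e3]
              _ ≤ μ ^ (p - 2) * t ^ (p / 2) * μ ^ 2 := by
                  apply mul_le_mul_of_nonneg_right _ (sq_nonneg μ)
                  exact mul_le_mul_of_nonneg_right e12 htp
              _ = (μ ^ (p - 2) * μ ^ (2:ℕ)) * t ^ (p / 2) := by ring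
              _ = μ ^ p * t ^ (p / 2) := by rw [e4]
          have e5 : t ^ (p / 2) ≤ (1 + t) ^ (p / 2) :=
            Real.rpow_le_rpow ht (by linarith) (by positivity)
          calc t * μ ^ 2 / (1 + t * μ ^ 2) ≤ t * μ ^ 2 := hc2
            _ ≤ μ ^ p * t ^ (p / 2) := key
            _ ≤ μ ^ p * (1 + t) ^ (p / 2) := mul_le_mul_of_nonneg_left e5 hμp
      · have htb : (μ ^ 2)⁻¹ ≤ 1 + t := by
          have : ((μ:ℝ) ^ 2)⁻¹ < t := by
            rw [show ((μ:ℝ) ^ 2)⁻¹ = 1 / μ ^ 2 by ring, div_lt_iff₀ (by positivity)]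
            exact htμ
          linarith
        have e1 : ((μ ^ 2 : ℝ))⁻¹ ^ (p / 2) ≤ (1 + t) ^ (p / 2) :=
          Real.rpow_le_rpow (by positivity) htb (by positivity)
        have e2 : (((μ:ℝ) ^ 2)⁻¹) ^ (p / 2) = μ ^ (-p) := by
          rw [← hμ2r, ← Real.rpow_neg hμ0.le, ← Real.rpow_mul hμ0.le]
          congr 1; ring
        have e3 : μ ^ p * μ ^ (-p) = 1 := by
          rw [← Real.rpow_add hμ0]; norm_num
        calc t * μ ^ 2 / (1 + t * μ ^ 2) ≤ 1 := hc1
          _ = μ ^ p * μ ^ (-p) := e3.symm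
          _ ≤ μ ^ p * (1 + t) ^ (p / 2) :=
              mul_le_mul_of_nonneg_left (e2 ▸ e1) hμp
    calc t * μ ^ 2 / (1 + t * μ ^ 2) ≤ μ ^ p * (1 + t) ^ (p / 2) := main
      _ ≤ (μ ^ p * max 1 (μ ^ (2 - p))) * (1 + t) ^ (p / 2) := by
          apply mul_le_mul_of_nonneg_right _ (by positivity)
          exact le_mul_of_one_le_right hμp (le_max_left _ _)
  · -- 2 < p
    have hx : 1 ≤ μ ^ (2 - p) :=
      Real.one_le_rpow_of_pos_of_le_one_of_nonpos hμ0 hμ1 (by linarith)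
    have h1 : (1 + t) ≤ (1 + t) ^ (p / 2) := by
      nth_rewrite 1 [← Real.rpow_one (1 + t)]
      exact Real.rpow_le_rpow_of_exponent_le hs1 (by linarith)
    have h2 : μ ^ p * μ ^ (2 - p) = μ ^ (2:ℕ) := by
      rw [← Real.rpow_add hμ0, ← hμ2r]; norm_num
    calc t * μ ^ 2 / (1 + t * μ ^ 2) ≤ t * μ ^ 2 := hc2
      _ ≤ (1 + t) * μ ^ 2 := by nlinarith [sq_nonneg μ]
      _ ≤ (1 + t) ^ (p / 2) * μ ^ 2 := mul_le_mul_of_nonneg_right h1 (sq_nonneg μ)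
      _ = (μ ^ p * μ ^ (2 - p)) * (1 + t) ^ (p / 2) := by rw [h2]; ring
      _ ≤ (μ ^ p * max 1 (μ ^ (2 - p))) * (1 + t) ^ (p / 2) := by
          apply mul_le_mul_of_nonneg_right _ (by positivity)
          exact mul_le_mul_of_nonneg_left (le_max_right _ _) hμp

/-- Error estimate for the modified regularization method. Here `𝓕` denotes
the unitary Fourier–Plancherel transform on `L²(ℝ, ℂ)` (this version of
Mathlib does not contain it, so it is taken as an arbitrary unitary map of
`L²(ℝ, ℂ)`; the statement depends on the Fourier transform only through its
unitarity). Let `0 < δ ≤ E`, `p > 0`, and `g, g_δ, f, f_{δ,μ} ∈ L²(ℝ, ℂ)` with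
`‖g − g_δ‖ ≤ δ`, `𝓕f(ξ) = ξ²/(1 − e^{−ξ})·𝓕g(ξ)` for a.e. `ξ ≠ 0`,
`∫ |𝓕f(ξ)|²(1 + ξ²)^p dξ ≤ E²`, and, with `μ = (δ/E)^{1/(p+2)}`,
`𝓕f_{δ,μ}(ξ) = ξ²/((1 − e^{−ξ})(1 + ξ²μ²))·𝓕g_δ(ξ)` for a.e. `ξ ≠ 0`. Then
`‖f − f_{δ,μ}‖ ≤ 2δ^{p/(p+2)}E^{2/(p+2)}(1 + (1/2)max{1, μ^{2−p}})`. -/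
theorem stmt_0 (p E δ μ : ℝ) (hp : 0 < p) (hE : 0 < E) (hδ : 0 < δ) (hδE : δ ≤ E)
    (𝓕 : Lp ℂ 2 (volume : Measure ℝ) ≃ₗᵢ[ℂ] Lp ℂ 2 (volume : Measure ℝ))
    (g gδ f fδμ : Lp ℂ 2 (volume : Measure ℝ))
    (hμ : μ = (δ / E) ^ ((1 : ℝ) / (p + 2)))
    (hnoise : ‖g - gδ‖ ≤ δ)
    (hFf : ∀ᵐ ξ : ℝ, ξ ≠ 0 →
      (𝓕 f : ℝ → ℂ) ξ = ((ξ ^ 2 / (1 - Real.exp (-ξ)) : ℝ) : ℂ) * (𝓕 g : ℝ → ℂ) ξ)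
    (hsob : ∫⁻ ξ : ℝ, (‖(𝓕 f : ℝ → ℂ) ξ‖₊ : ℝ≥0∞) ^ 2 *
        ENNReal.ofReal ((1 + ξ ^ 2) ^ p) ≤ ENNReal.ofReal (E ^ 2))
    (hFfδμ : ∀ᵐ ξ : ℝ, ξ ≠ 0 →
      (𝓕 fδμ : ℝ → ℂ) ξ =
        ((ξ ^ 2 / ((1 - Real.exp (-ξ)) * (1 + ξ ^ 2 * μ ^ 2)) : ℝ) : ℂ) *
          (𝓕 gδ : ℝ → ℂ) ξ) :
    ‖f - fδμ‖ ≤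
      2 * δ ^ (p / (p + 2)) * E ^ ((2 : ℝ) / (p + 2)) *
        (1 + (1 / 2) * max 1 (μ ^ (2 - p))) := by
  have hμ0 : 0 < μ := hμ ▸ Real.rpow_pos_of_pos (div_pos hδ hE) _
  have hμ1 : μ ≤ 1 := by
    rw [hμ]
    exact Real.rpow_le_one (by positivity) (div_le_one_of_le₀ hδE hE.le) (by positivity)
  set C1 : ℝ := 3 / (2 * μ ^ 2) with hC1def
  set C2 : ℝ := μ ^ p * max 1 (μ ^ (2 - p)) with hC2def
  have hC1 : 0 ≤ C1 := by positivity
  have hC2 : 0 ≤ C2 := by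
    apply mul_nonneg (Real.rpow_nonneg hμ0.le p)
    exact le_trans zero_le_one (le_max_left _ _)
  set u := (𝓕 f : ℝ → ℂ) with hudef
  set v := (𝓕 fδμ : ℝ → ℂ) with hvdef
  set w := (𝓕 g : ℝ → ℂ) with hwdef
  set wδ := (𝓕 gδ : ℝ → ℂ) with hwδdef
  set q : ℝ → ℝ := fun ξ => ξ ^ 2 / ((1 - Real.exp (-ξ)) * (1 + ξ ^ 2 * μ ^ 2)) with hqdef
  set c : ℝ → ℝ := fun ξ => ξ ^ 2 * μ ^ 2 / (1 + ξ ^ 2 * μ ^ 2) with hcdef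
  set A : ℝ → ℂ := fun ξ => (q ξ : ℂ) * (w ξ - wδ ξ) with hAdef
  set B : ℝ → ℂ := fun ξ => (c ξ : ℂ) * u ξ with hBdef
  have h0 : ∀ᵐ ξ : ℝ, ξ ≠ (0:ℝ) := by
    rw [ae_iff]; simpa using measure_singleton (0:ℝ)
  -- a.e. decomposition
  have hsplit : (u - v) =ᶠ[ae volume] A + B := by
    filter_upwards [hFf, hFfδμ, h0] with ξ h1 h2 h3
    simp only [Pi.sub_apply]
    have he : 1 - Real.exp (-ξ) ≠ 0 := by
      intro hcon
      have : Real.exp (-ξ) = 1 := by linarith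
      rw [Real.exp_eq_one_iff] at this
      exact h3 (by linarith)
    have hd : (1:ℝ) + ξ ^ 2 * μ ^ 2 > 0 := by positivity
    simp only [Pi.add_apply, hAdef, hBdef, hqdef, hcdef]
    rw [h1 h3, h2 h3]
    have hidR : ξ ^ 2 / (1 - Real.exp (-ξ)) -
        ξ ^ 2 / ((1 - Real.exp (-ξ)) * (1 + ξ ^ 2 * μ ^ 2)) =
        (ξ ^ 2 * μ ^ 2 / (1 + ξ ^ 2 * μ ^ 2)) * (ξ ^ 2 / (1 - Real.exp (-ξ))) := by
      field_simp
      ring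
    have hid : ((ξ ^ 2 / (1 - Real.exp (-ξ)) : ℝ) : ℂ) -
        ((ξ ^ 2 / ((1 - Real.exp (-ξ)) * (1 + ξ ^ 2 * μ ^ 2)) : ℝ) : ℂ) =
        ((ξ ^ 2 * μ ^ 2 / (1 + ξ ^ 2 * μ ^ 2) : ℝ) : ℂ) *
          ((ξ ^ 2 / (1 - Real.exp (-ξ)) : ℝ) : ℂ) := by
      rw [← Complex.ofReal_mul, ← Complex.ofReal_sub, hidR]
    linear_combination (w ξ) * hid
  -- measurability
  have hqm : Measurable q := by fun_prop
  have hcm : Measurable c := by fun_prop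
  have hmA : AEStronglyMeasurable A volume := by
    exact ((Complex.measurable_ofReal.comp hqm).aestronglyMeasurable).mul
      ((Lp.aestronglyMeasurable _).sub (Lp.aestronglyMeasurable _))
  have hmB : AEStronglyMeasurable B volume := by
    exact ((Complex.measurable_ofReal.comp hcm).aestronglyMeasurable).mul
      (Lp.aestronglyMeasurable _)
  -- norm rewriting
  have hnorm : ‖f - fδμ‖ = (eLpNorm (u - v) 2 (volume : Measure ℝ)).toReal := by
    rw [← 𝓕.norm_map (f - fδμ), map_sub, Lp.norm_def,
      eLpNorm_congr_ae (Lp.coeFn_sub (𝓕 f) (𝓕 fδμ))]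
  -- bound for A
  have hAle : eLpNorm A 2 (volume : Measure ℝ) ≤ ENNReal.ofReal (C1 * δ) := by
    have hb : ∀ᵐ ξ ∂(volume : Measure ℝ), ‖A ξ‖ ≤ ‖(C1 • (w - wδ)) ξ‖ := by
      refine Filter.Eventually.of_forall fun ξ => ?_
      simp only [hAdef, Pi.smul_apply, Pi.sub_apply, norm_mul, norm_smul, Complex.norm_real,
        Real.norm_eq_abs, abs_of_nonneg hC1]
      exact mul_le_mul_of_nonneg_right (aux_q_bound μ ξ hμ0 hμ1) (norm_nonneg _)
    calc eLpNorm A 2 (volume : Measure ℝ)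
        ≤ eLpNorm (C1 • (w - wδ)) 2 (volume : Measure ℝ) := eLpNorm_mono_ae hb
      _ = ‖C1‖₊ * eLpNorm (w - wδ) 2 (volume : Measure ℝ) :=
          eLpNorm_const_smul _ _ _ _
      _ = ENNReal.ofReal C1 * eLpNorm (⇑(𝓕 g - 𝓕 gδ)) 2 (volume : Measure ℝ) := by
          rw [show (‖C1‖₊ : ℝ≥0∞) = ENNReal.ofReal C1 from Real.enorm_eq_ofReal hC1, eLpNorm_congr_ae (Lp.coeFn_sub (𝓕 g) (𝓕 gδ))]
      _ = ENNReal.ofReal C1 * ENNReal.ofReal ‖𝓕 g - 𝓕 gδ‖ := by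
          rw [Lp.norm_def, ENNReal.ofReal_toReal (Lp.eLpNorm_ne_top _)]
      _ ≤ ENNReal.ofReal C1 * ENNReal.ofReal δ := by
          apply mul_le_mul_right
          apply ENNReal.ofReal_le_ofReal
          rw [← map_sub, 𝓕.norm_map]
          exact hnoise
      _ = ENNReal.ofReal (C1 * δ) := (ENNReal.ofReal_mul hC1).symm
  -- bound for B
  have hBle : eLpNorm B 2 (volume : Measure ℝ) ≤ ENNReal.ofReal (C2 * E) := by
    rw [eLpNorm_eq_lintegral_rpow_enorm_toReal (by norm_num) (by norm_num)]
    have h2t : (2 : ℝ≥0∞).toReal = 2 := by norm_num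
    rw [h2t]
    have hpt : ∀ ξ : ℝ, (‖B ξ‖₊ : ℝ≥0∞) ^ (2:ℝ) ≤
        ENNReal.ofReal (C2 ^ 2) * ((‖u ξ‖₊ : ℝ≥0∞) ^ 2 * ENNReal.ofReal ((1 + ξ ^ 2) ^ p)) := by
      intro ξ
      have hs0 : (0:ℝ) ≤ (1 + ξ ^ 2) ^ (p / 2) := Real.rpow_nonneg (by positivity) _
      have h1 : ‖B ξ‖ ≤ (C2 * (1 + ξ ^ 2) ^ (p / 2)) * ‖u ξ‖ := by
        simp only [hBdef, norm_mul, Complex.norm_real, Real.norm_eq_abs]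
        apply mul_le_mul_of_nonneg_right _ (norm_nonneg _)
        rw [hcdef, abs_of_nonneg (by positivity)]
        exact aux_c_bound p μ ξ hp hμ0 hμ1
      have h2 : (‖B ξ‖₊ : ℝ≥0∞) ≤ ENNReal.ofReal (C2 * (1 + ξ ^ 2) ^ (p / 2)) * ‖u ξ‖₊ := by
        rw [← enorm_eq_nnnorm, ← enorm_eq_nnnorm, ← ofReal_norm, ← ofReal_norm,
          ← ENNReal.ofReal_mul (by positivity)]
        exact ENNReal.ofReal_le_ofReal h1
      have hs2 : (((1 + ξ ^ 2) ^ (p / 2) : ℝ)) ^ (2:ℕ) = (1 + ξ ^ 2) ^ p := by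
        rw [← Real.rpow_natCast ((1 + ξ ^ 2) ^ (p / 2)) 2, ← Real.rpow_mul (by positivity)]
        norm_num
      calc (‖B ξ‖₊ : ℝ≥0∞) ^ (2:ℝ)
          ≤ (ENNReal.ofReal (C2 * (1 + ξ ^ 2) ^ (p / 2)) * ‖u ξ‖₊) ^ (2:ℝ) :=
            ENNReal.rpow_le_rpow h2 (by norm_num)
        _ = ENNReal.ofReal (C2 * (1 + ξ ^ 2) ^ (p / 2)) ^ (2:ℝ) * (‖u ξ‖₊ : ℝ≥0∞) ^ (2:ℝ) :=
            ENNReal.mul_rpow_of_nonneg _ _ (by norm_num)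
        _ = ENNReal.ofReal ((C2 * (1 + ξ ^ 2) ^ (p / 2)) ^ (2:ℝ)) * (‖u ξ‖₊ : ℝ≥0∞) ^ (2:ℝ) := by
            rw [ENNReal.ofReal_rpow_of_nonneg (by positivity) (by norm_num)]
        _ = ENNReal.ofReal (C2 ^ 2 * (1 + ξ ^ 2) ^ p) * (‖u ξ‖₊ : ℝ≥0∞) ^ (2:ℕ) := by
            have e1 : (C2 * (1 + ξ ^ 2) ^ (p / 2)) ^ (2:ℝ)
                = (C2 * (1 + ξ ^ 2) ^ (p / 2)) ^ (2:ℕ) := by norm_num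
            have e2 : ((‖u ξ‖₊ : ℝ≥0∞)) ^ (2:ℝ) = (‖u ξ‖₊ : ℝ≥0∞) ^ (2:ℕ) := by
              rw [show (2:ℝ) = ((2:ℕ):ℝ) by norm_num, ENNReal.rpow_natCast]
            rw [e1, e2, mul_pow, hs2]
        _ = ENNReal.ofReal (C2 ^ 2) * ((‖u ξ‖₊ : ℝ≥0∞) ^ 2 * ENNReal.ofReal ((1 + ξ ^ 2) ^ p)) := by
            rw [ENNReal.ofReal_mul (by positivity)]
            ring
    have hint : ∫⁻ ξ : ℝ, (‖B ξ‖₊ : ℝ≥0∞) ^ (2:ℝ) ≤ ENNReal.ofReal (C2 ^ 2 * E ^ 2) := by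
      calc ∫⁻ ξ : ℝ, (‖B ξ‖₊ : ℝ≥0∞) ^ (2:ℝ)
          ≤ ∫⁻ ξ : ℝ, ENNReal.ofReal (C2 ^ 2) *
              ((‖u ξ‖₊ : ℝ≥0∞) ^ 2 * ENNReal.ofReal ((1 + ξ ^ 2) ^ p)) :=
            lintegral_mono hpt
        _ = ENNReal.ofReal (C2 ^ 2) *
            ∫⁻ ξ : ℝ, (‖u ξ‖₊ : ℝ≥0∞) ^ 2 * ENNReal.ofReal ((1 + ξ ^ 2) ^ p) :=
            lintegral_const_mul' _ _ ENNReal.ofReal_ne_top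
        _ ≤ ENNReal.ofReal (C2 ^ 2) * ENNReal.ofReal (E ^ 2) := mul_le_mul_right hsob _
        _ = ENNReal.ofReal (C2 ^ 2 * E ^ 2) := (ENNReal.ofReal_mul (by positivity)).symm
    calc (∫⁻ ξ : ℝ, (‖B ξ‖₊ : ℝ≥0∞) ^ (2:ℝ)) ^ ((1:ℝ)/2)
        ≤ (ENNReal.ofReal (C2 ^ 2 * E ^ 2)) ^ ((1:ℝ)/2) :=
          ENNReal.rpow_le_rpow hint (by norm_num)
      _ = ENNReal.ofReal ((C2 ^ 2 * E ^ 2) ^ ((1:ℝ)/2)) :=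
          ENNReal.ofReal_rpow_of_nonneg (by positivity) (by norm_num)
      _ = ENNReal.ofReal (C2 * E) := by
          congr 1
          rw [show C2 ^ 2 * E ^ 2 = (C2 * E) ^ 2 by ring,
            ← Real.rpow_natCast (C2 * E) 2, ← Real.rpow_mul (by positivity)]
          norm_num
  -- combine
  have hsum : eLpNorm (u - v) 2 (volume : Measure ℝ) ≤
      ENNReal.ofReal (C1 * δ + C2 * E) := by
    rw [eLpNorm_congr_ae hsplit]
    calc eLpNorm (A + B) 2 (volume : Measure ℝ)
        ≤ eLpNorm A 2 (volume : Measure ℝ) + eLpNorm B 2 (volume : Measure ℝ) :=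
          eLpNorm_add_le hmA hmB (by norm_num)
      _ ≤ ENNReal.ofReal (C1 * δ) + ENNReal.ofReal (C2 * E) := add_le_add hAle hBle
      _ = ENNReal.ofReal (C1 * δ + C2 * E) :=
          (ENNReal.ofReal_add (by positivity) (by positivity)).symm
  -- arithmetic
  set M : ℝ := max 1 (μ ^ (2 - p)) with hMdef
  have hM1 : (1:ℝ) ≤ M := le_max_left _ _
  set K : ℝ := δ ^ (p / (p + 2)) * E ^ ((2:ℝ) / (p + 2)) with hKdef
  have hK0 : (0:ℝ) ≤ K := by positivity
  have hpne : p + 2 ≠ 0 := by positivity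
  have hδE2 : μ ^ (2:ℕ) = δ ^ ((2:ℝ)/(p+2)) / E ^ ((2:ℝ)/(p+2)) := by
    rw [hμ, ← Real.rpow_natCast ((δ/E) ^ ((1:ℝ)/(p+2))) 2,
      ← Real.rpow_mul (div_nonneg hδ.le hE.le),
      show (1:ℝ)/(p+2) * ((2:ℕ):ℝ) = (2:ℝ)/(p+2) by push_cast; ring,
      Real.div_rpow hδ.le hE.le]
  have hμpE : μ ^ p = δ ^ (p/(p+2)) / E ^ (p/(p+2)) := by
    rw [hμ, ← Real.rpow_mul (div_nonneg hδ.le hE.le),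
      show (1:ℝ)/(p+2) * p = p/(p+2) by ring, Real.div_rpow hδ.le hE.le]
  have hδ1 : δ ^ (p/(p+2)) * δ ^ ((2:ℝ)/(p+2)) = δ := by
    rw [← Real.rpow_add hδ, show p/(p+2) + (2:ℝ)/(p+2) = 1 by field_simp, Real.rpow_one]
  have hE1 : E ^ (p/(p+2)) * E ^ ((2:ℝ)/(p+2)) = E := by
    rw [← Real.rpow_add hE, show p/(p+2) + (2:ℝ)/(p+2) = 1 by field_simp, Real.rpow_one]
  have hδa : (0:ℝ) < δ ^ ((2:ℝ)/(p+2)) := Real.rpow_pos_of_pos hδ _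
  have hδb : (0:ℝ) < δ ^ (p/(p+2)) := Real.rpow_pos_of_pos hδ _
  have hEa : (0:ℝ) < E ^ ((2:ℝ)/(p+2)) := Real.rpow_pos_of_pos hE _
  have hEb : (0:ℝ) < E ^ (p/(p+2)) := Real.rpow_pos_of_pos hE _
  have hKey : δ / μ ^ 2 = K := by
    rw [hδE2, hKdef, div_div_eq_mul_div, div_eq_iff (ne_of_gt hδa),
      mul_right_comm (δ ^ (p/(p+2))) (E ^ ((2:ℝ)/(p+2))) (δ ^ ((2:ℝ)/(p+2))), hδ1]
  have hEKey : μ ^ p * E = K := by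
    rw [hμpE, hKdef, div_mul_eq_mul_div, div_eq_iff (ne_of_gt hEb), mul_assoc,
      mul_comm (E ^ ((2:ℝ)/(p+2))) (E ^ (p/(p+2))), hE1]
  have hC1δ : C1 * δ = (3/2) * K := by
    rw [hC1def, ← hKey]; ring
  have hC2E : C2 * E = K * M := by
    rw [hC2def, ← hEKey]; ring
  have harith : C1 * δ + C2 * E ≤
      2 * δ ^ (p / (p + 2)) * E ^ ((2:ℝ) / (p + 2)) * (1 + (1/2) * M) := by
    have hrhs : 2 * δ ^ (p / (p + 2)) * E ^ ((2:ℝ) / (p + 2)) * (1 + (1/2) * M) =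
        2 * K + K * M := by rw [hKdef]; ring
    rw [hC1δ, hC2E, hrhs]
    nlinarith [hK0, hM1]
  -- finish
  rw [hnorm]
  have hRHS0 : (0:ℝ) ≤ 2 * δ ^ (p / (p + 2)) * E ^ ((2:ℝ) / (p + 2)) * (1 + (1/2) * M) := by
    apply mul_nonneg (by positivity)
    linarith
  apply ENNReal.toReal_le_of_le_ofReal hRHS0
  exact hsum.trans (ENNReal.ofReal_le_ofReal harith)
end

section
/- Let p > 0, μ > 0, δ > 0, E > 0. Let F, G, G_δ ∈ L²(ℝ, ℂ) satisfy: F(ξ) = ξ²/(1 − e^{−ξ}) · G(ξ) for a.e. ξ ≠ 0; ‖G − G_δ‖_{L²} ≤ δ; and ∫_ℝ |F(ξ)|² (1 + ξ²)^p dξ ≤ E². Define F_{δ,μ}(ξ) = ξ²/((1 − e^{−ξ})(1 + μ²ξ²)) · G_δ(ξ). Then ‖F − F_{δ,μ}‖_{L²} ≤ (1/(2μ) + 1/μ²) δ + E max{μ², μ^p}. -/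
open MeasureTheory ENNReal


lemma mult_bound (μ : ℝ) (hμ : 0 < μ) (ξ : ℝ) :
    |ξ ^ 2 / ((1 - Real.exp (-ξ)) * (1 + μ ^ 2 * ξ ^ 2))| ≤ 1 / (2 * μ) + 1 / μ ^ 2 := by
  have hden : (0:ℝ) < 1 + μ ^ 2 * ξ ^ 2 := by positivity
  have hC : (0:ℝ) ≤ 1 / (2 * μ) + 1 / μ ^ 2 := by positivity
  rcases lt_trichotomy ξ 0 with h | h | h
  · -- ξ < 0 : |1 - exp(-ξ)| = exp(-ξ) - 1 ≥ -ξ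
    have he : Real.exp (-ξ) - 1 ≥ -ξ := by
      nlinarith [Real.add_one_le_exp (-ξ)]
    have hne : 1 - Real.exp (-ξ) < 0 := by
      have := Real.exp_lt_exp.mpr (show (0:ℝ) < -ξ by linarith)
      simpa using by nlinarith [this, Real.exp_zero]
    rw [abs_div, abs_of_nonneg (by positivity : (0:ℝ) ≤ ξ ^ 2)]
    rw [abs_mul, abs_of_nonpos hne.le, abs_of_pos hden]
    have key : ξ ^ 2 / ((Real.exp (-ξ) - 1) * (1 + μ ^ 2 * ξ ^ 2)) ≤ 1 / (2 * μ) := by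
      rw [div_le_div_iff₀ (by nlinarith) (by positivity)]
      nlinarith [sq_nonneg (1 + μ * ξ), sq_nonneg ξ, mul_pos hμ hden, he,
        mul_le_mul_of_nonneg_right he (le_of_lt hden)]
    calc ξ ^ 2 / (-(1 - Real.exp (-ξ)) * (1 + μ ^ 2 * ξ ^ 2))
        = ξ ^ 2 / ((Real.exp (-ξ) - 1) * (1 + μ ^ 2 * ξ ^ 2)) := by ring_nf
      _ ≤ 1 / (2 * μ) := key
      _ ≤ 1 / (2 * μ) + 1 / μ ^ 2 := le_add_of_nonneg_right (by positivity)
  · simp only [h]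
    norm_num
    positivity
  · -- ξ > 0
    have hpos : 0 < 1 - Real.exp (-ξ) := by
      have := Real.exp_lt_exp.mpr (show -ξ < 0 by linarith)
      simpa using by nlinarith [this, Real.exp_zero]
    have h1 : (1 + ξ) * Real.exp (-ξ) ≤ 1 := by
      have hmul : Real.exp (-ξ) * Real.exp ξ = 1 := by
        rw [← Real.exp_add]; simp
      nlinarith [hmul, Real.add_one_le_exp ξ, Real.exp_pos (-ξ)]
    have hξe : ξ ≤ (1 - Real.exp (-ξ)) * (1 + ξ) := by nlinarith
    have hpoly : ξ * (1 + ξ) ≤ (1 / (2 * μ) + 1 / μ ^ 2) * (1 + μ ^ 2 * ξ ^ 2) := by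
      have h2 : ξ * (1 + ξ) * (2 * μ ^ 2) ≤
          (1 / (2 * μ) + 1 / μ ^ 2) * (1 + μ ^ 2 * ξ ^ 2) * (2 * μ ^ 2) := by
        have hr : (1 / (2 * μ) + 1 / μ ^ 2) * (1 + μ ^ 2 * ξ ^ 2) * (2 * μ ^ 2)
            = (μ + 2) * (1 + μ ^ 2 * ξ ^ 2) := by field_simp
        rw [hr]
        nlinarith [mul_nonneg hμ.le (sq_nonneg (1 - μ * ξ)), sq_nonneg ξ]
      exact le_of_mul_le_mul_right h2 (by positivity)
    rw [abs_of_nonneg (div_nonneg (sq_nonneg ξ) (mul_pos hpos hden).le)]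
    rw [div_le_iff₀ (mul_pos hpos hden)]
    nlinarith [mul_le_mul_of_nonneg_left hξe h.le,
      mul_le_mul_of_nonneg_left hpoly hpos.le]


lemma bias_bound (p μ : ℝ) (hp : 0 < p) (hμ : 0 < μ) (ξ : ℝ) :
    μ ^ 2 * ξ ^ 2 / (1 + μ ^ 2 * ξ ^ 2) ≤ max (μ ^ 2) (μ ^ p) * (1 + ξ ^ 2) ^ (p / 2) := by
  have hden : (0:ℝ) < 1 + μ ^ 2 * ξ ^ 2 := by positivity
  have hb : (1:ℝ) ≤ 1 + ξ ^ 2 := by nlinarith [sq_nonneg ξ]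
  have hbp : (0:ℝ) ≤ (1 + ξ ^ 2) ^ (p / 2) := Real.rpow_nonneg (by linarith) _
  have hμp : (0:ℝ) < μ ^ p := Real.rpow_pos_of_pos hμ p
  have hsq : (μ ^ 2 : ℝ) ^ (p / 2) = μ ^ p := by
    rw [← Real.rpow_natCast μ 2, ← Real.rpow_mul hμ.le]
    congr 1
    push_cast
    ring
  rcases le_or_gt 1 (μ ^ 2 * ξ ^ 2) with hcase | hcase
  · -- large frequency: LHS ≤ 1 ≤ μ^p (1+ξ²)^{p/2}
    have h1 : μ ^ 2 * ξ ^ 2 / (1 + μ ^ 2 * ξ ^ 2) ≤ 1 := by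
      rw [div_le_one hden]; linarith
    have h2 : (1:ℝ) ≤ μ ^ p * (1 + ξ ^ 2) ^ (p / 2) := by
      have hmul : μ ^ p * (1 + ξ ^ 2) ^ (p / 2) = (μ ^ 2 * (1 + ξ ^ 2)) ^ (p / 2) := by
        rw [Real.mul_rpow (by positivity) (by linarith), hsq]
      rw [hmul]
      calc (1:ℝ) = 1 ^ (p / 2) := (Real.one_rpow _).symm
        _ ≤ (μ ^ 2 * (1 + ξ ^ 2)) ^ (p / 2) := by
            apply Real.rpow_le_rpow (by norm_num) _ (by positivity)
            nlinarith [sq_nonneg μ, sq_nonneg ξ]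
    calc μ ^ 2 * ξ ^ 2 / (1 + μ ^ 2 * ξ ^ 2) ≤ 1 := h1
      _ ≤ μ ^ p * (1 + ξ ^ 2) ^ (p / 2) := h2
      _ ≤ max (μ ^ 2) (μ ^ p) * (1 + ξ ^ 2) ^ (p / 2) :=
          mul_le_mul_of_nonneg_right (le_max_right _ _) hbp
  · -- small frequency: LHS ≤ μ²ξ²
    have h1 : μ ^ 2 * ξ ^ 2 / (1 + μ ^ 2 * ξ ^ 2) ≤ μ ^ 2 * ξ ^ 2 := by
      rw [div_le_iff₀ hden]; nlinarith [sq_nonneg (μ * ξ)]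
    rcases le_or_gt p 2 with hp2 | hp2
    · -- p ≤ 2 : μ²ξ² ≤ (μ²ξ²)^{p/2} ≤ μ^p (1+ξ²)^{p/2}
      rcases eq_or_ne ξ 0 with rfl | hξ0
      · simp only [ne_eq, OfNat.ofNat_ne_zero, not_false_eq_true, zero_pow, mul_zero,
          zero_div]
        positivity
      have hbase : 0 < μ ^ 2 * ξ ^ 2 := by positivity
      have h2 : μ ^ 2 * ξ ^ 2 ≤ (μ ^ 2 * ξ ^ 2) ^ (p / 2) := by
        calc μ ^ 2 * ξ ^ 2 = (μ ^ 2 * ξ ^ 2) ^ (1:ℝ) := (Real.rpow_one _).symm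
          _ ≤ (μ ^ 2 * ξ ^ 2) ^ (p / 2) :=
            Real.rpow_le_rpow_of_exponent_ge hbase hcase.le (by linarith)
      have h3 : (μ ^ 2 * ξ ^ 2) ^ (p / 2) ≤ μ ^ p * (1 + ξ ^ 2) ^ (p / 2) := by
        rw [Real.mul_rpow (by positivity) (sq_nonneg ξ), hsq]
        apply mul_le_mul_of_nonneg_left _ hμp.le
        exact Real.rpow_le_rpow (sq_nonneg ξ) (by linarith) (by positivity)
      calc μ ^ 2 * ξ ^ 2 / (1 + μ ^ 2 * ξ ^ 2) ≤ μ ^ 2 * ξ ^ 2 := h1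
        _ ≤ (μ ^ 2 * ξ ^ 2) ^ (p / 2) := h2
        _ ≤ μ ^ p * (1 + ξ ^ 2) ^ (p / 2) := h3
        _ ≤ max (μ ^ 2) (μ ^ p) * (1 + ξ ^ 2) ^ (p / 2) :=
            mul_le_mul_of_nonneg_right (le_max_right _ _) hbp
    · -- p > 2 : μ²ξ² ≤ μ²(1+ξ²) ≤ μ² (1+ξ²)^{p/2}
      have h2 : μ ^ 2 * ξ ^ 2 ≤ μ ^ 2 * (1 + ξ ^ 2) ^ (p / 2) := by
        apply mul_le_mul_of_nonneg_left _ (sq_nonneg μ)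
        calc ξ ^ 2 ≤ 1 + ξ ^ 2 := by linarith
          _ = (1 + ξ ^ 2) ^ (1:ℝ) := (Real.rpow_one _).symm
          _ ≤ (1 + ξ ^ 2) ^ (p / 2) :=
            Real.rpow_le_rpow_of_exponent_le hb (by linarith)
      calc μ ^ 2 * ξ ^ 2 / (1 + μ ^ 2 * ξ ^ 2) ≤ μ ^ 2 * ξ ^ 2 := h1
        _ ≤ μ ^ 2 * (1 + ξ ^ 2) ^ (p / 2) := h2
        _ ≤ max (μ ^ 2) (μ ^ p) * (1 + ξ ^ 2) ^ (p / 2) :=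
            mul_le_mul_of_nonneg_right (le_max_left _ _) hbp

/-- Frequency-domain error decomposition for the modified regularization
method: if `F(ξ) = ξ²/(1 − e^{−ξ})·G(ξ)` a.e. on `ξ ≠ 0`, `‖G − G_δ‖_{L²} ≤ δ`
and `∫ |F(ξ)|²(1 + ξ²)^p dξ ≤ E²`, then with
`F_{δ,μ}(ξ) = ξ²/((1 − e^{−ξ})(1 + μ²ξ²))·G_δ(ξ)` one has
`‖F − F_{δ,μ}‖_{L²} ≤ (1/(2μ) + 1/μ²)δ + E·max{μ², μ^p}`. -/
theorem stmt_1 (p μ δ E : ℝ) (hp : 0 < p) (hμ : 0 < μ) (hδ : 0 < δ) (hE : 0 < E)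
    (F G Gδ : ℝ → ℂ)
    (hF : MemLp F 2 (volume : Measure ℝ))
    (hG : MemLp G 2 (volume : Measure ℝ))
    (hGδ : MemLp Gδ 2 (volume : Measure ℝ))
    (hFG : ∀ᵐ ξ : ℝ, ξ ≠ 0 → F ξ = ((ξ ^ 2 / (1 - Real.exp (-ξ)) : ℝ) : ℂ) * G ξ)
    (hnoise : eLpNorm (G - Gδ) 2 (volume : Measure ℝ) ≤ ENNReal.ofReal δ)
    (hsob : ∫⁻ ξ : ℝ, (‖F ξ‖₊ : ℝ≥0∞) ^ 2 * ENNReal.ofReal ((1 + ξ ^ 2) ^ p) ≤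
      ENNReal.ofReal (E ^ 2)) :
    eLpNorm (fun ξ : ℝ => F ξ -
        ((ξ ^ 2 / ((1 - Real.exp (-ξ)) * (1 + μ ^ 2 * ξ ^ 2)) : ℝ) : ℂ) * Gδ ξ) 2
        (volume : Measure ℝ) ≤
      ENNReal.ofReal ((1 / (2 * μ) + 1 / μ ^ 2) * δ + E * max (μ ^ 2) (μ ^ p)) := by
  set C : ℝ := 1 / (2 * μ) + 1 / μ ^ 2 with hCdef
  set M : ℝ := max (μ ^ 2) (μ ^ p) with hMdef
  have hC0 : (0:ℝ) ≤ C := by positivity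
  have hM0 : (0:ℝ) < M := lt_max_of_lt_left (by positivity)
  set b : ℝ → ℂ := fun ξ => ((μ ^ 2 * ξ ^ 2 / (1 + μ ^ 2 * ξ ^ 2) : ℝ) : ℂ) * F ξ with hbdef
  set n : ℝ → ℂ := fun ξ =>
    ((ξ ^ 2 / ((1 - Real.exp (-ξ)) * (1 + μ ^ 2 * ξ ^ 2)) : ℝ) : ℂ) * (G ξ - Gδ ξ) with hndef
  -- a.e. decomposition
  have hzero : ∀ᵐ ξ : ℝ, ξ ≠ 0 := by
    rw [ae_iff]
    have h01 : {a : ℝ | ¬ a ≠ 0} = {0} := by ext x; simp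
    rw [h01]
    exact Real.volume_singleton
  have hae : (fun ξ : ℝ => F ξ -
      ((ξ ^ 2 / ((1 - Real.exp (-ξ)) * (1 + μ ^ 2 * ξ ^ 2)) : ℝ) : ℂ) * Gδ ξ)
      =ᵐ[volume] b + n := by
    filter_upwards [hFG, hzero] with ξ hFGξ hξ
    have hexp : 1 - Real.exp (-ξ) ≠ 0 := by
      intro hcon
      have h3 : Real.exp (-ξ) = Real.exp 0 := by rw [Real.exp_zero]; linarith
      have := Real.exp_eq_exp.mp h3
      exact hξ (by linarith)
    have hden : (1 : ℝ) + μ ^ 2 * ξ ^ 2 ≠ 0 := by positivity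
    have h1 : ((1 - Real.exp (-ξ) : ℝ) : ℂ) ≠ 0 := Complex.ofReal_ne_zero.mpr hexp
    have h2 : ((1 + μ ^ 2 * ξ ^ 2 : ℝ) : ℂ) ≠ 0 := Complex.ofReal_ne_zero.mpr hden
    show F ξ - _ = b ξ + n ξ
    simp only [hbdef, hndef]
    rw [hFGξ hξ]
    push_cast at h1 h2 ⊢
    field_simp
    have h2' : (1 + (ξ:ℂ)^2*(μ:ℂ)^2) ≠ 0 := by rw [mul_comm]; exact h2
    linear_combination (-((ξ:ℂ)^2 * G ξ)) * mul_inv_cancel₀ h2'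
  rw [eLpNorm_congr_ae hae]
  -- measurability
  have hb_m : AEStronglyMeasurable b volume := by
    apply AEStronglyMeasurable.mul _ hF.1
    apply Continuous.aestronglyMeasurable
    apply Complex.continuous_ofReal.comp
    exact Continuous.div (by continuity) (by continuity) (fun ξ => by positivity)
  have hn_m : AEStronglyMeasurable n volume := by
    apply AEStronglyMeasurable.mul _ (hG.1.sub hGδ.1)
    apply Measurable.aestronglyMeasurable
    apply Complex.measurable_ofReal.comp
    fun_prop
  -- noise term bound
  have hnoise_bd : eLpNorm n 2 volume ≤ ENNReal.ofReal (C * δ) := by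
    have hmono : eLpNorm n 2 volume ≤ eLpNorm ((C : ℂ) • (G - Gδ)) 2 volume := by
      apply eLpNorm_mono
      intro ξ
      calc ‖n ξ‖ = |ξ ^ 2 / ((1 - Real.exp (-ξ)) * (1 + μ ^ 2 * ξ ^ 2))| * ‖G ξ - Gδ ξ‖ := by
            simp only [hndef, norm_mul, Complex.norm_real, Real.norm_eq_abs]
        _ ≤ C * ‖G ξ - Gδ ξ‖ :=
            mul_le_mul_of_nonneg_right (mult_bound μ hμ ξ) (norm_nonneg _)
        _ = ‖((C : ℂ) • (G - Gδ)) ξ‖ := by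
            simp only [Pi.smul_apply, Pi.sub_apply, norm_smul, Complex.norm_real,
              Real.norm_eq_abs, abs_of_nonneg hC0]
    calc eLpNorm n 2 volume ≤ eLpNorm ((C : ℂ) • (G - Gδ)) 2 volume := hmono
      _ = (‖(C : ℂ)‖₊ : ℝ≥0∞) * eLpNorm (G - Gδ) 2 volume := eLpNorm_const_smul _ _ _ _
      _ = ENNReal.ofReal C * eLpNorm (G - Gδ) 2 volume := by
          rw [Complex.nnnorm_real, ← enorm_eq_nnnorm C, Real.enorm_eq_ofReal hC0]
      _ ≤ ENNReal.ofReal C * ENNReal.ofReal δ := mul_le_mul_right hnoise _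
      _ = ENNReal.ofReal (C * δ) := (ENNReal.ofReal_mul hC0).symm
  -- bias term bound
  have hbias_bd : eLpNorm b 2 volume ≤ ENNReal.ofReal (E * M) := by
    have hEM : (0:ℝ) ≤ E * M := by positivity
    have hint : ∫⁻ ξ : ℝ, (‖b ξ‖₊ : ℝ≥0∞) ^ (2:ℝ) ≤ ENNReal.ofReal ((E * M) ^ 2) := by
      have hle : ∀ ξ : ℝ, (‖b ξ‖₊ : ℝ≥0∞) ^ (2:ℝ) ≤
          ENNReal.ofReal (M ^ 2) *
            ((‖F ξ‖₊ : ℝ≥0∞) ^ 2 * ENNReal.ofReal ((1 + ξ ^ 2) ^ p)) := by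
        intro ξ
        have hq0 : (0:ℝ) ≤ μ ^ 2 * ξ ^ 2 / (1 + μ ^ 2 * ξ ^ 2) := by positivity
        have hqle : (μ ^ 2 * ξ ^ 2 / (1 + μ ^ 2 * ξ ^ 2)) ^ 2 ≤ M ^ 2 * (1 + ξ ^ 2) ^ p := by
          have h := bias_bound p μ hp hμ ξ
          have hsq := mul_self_le_mul_self hq0 h
          calc (μ ^ 2 * ξ ^ 2 / (1 + μ ^ 2 * ξ ^ 2)) ^ 2
              = (μ ^ 2 * ξ ^ 2 / (1 + μ ^ 2 * ξ ^ 2)) * (μ ^ 2 * ξ ^ 2 / (1 + μ ^ 2 * ξ ^ 2)) :=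
                sq _
            _ ≤ (M * (1 + ξ ^ 2) ^ (p / 2)) * (M * (1 + ξ ^ 2) ^ (p / 2)) := hsq
            _ = M ^ 2 * ((1 + ξ ^ 2) ^ (p / 2) * (1 + ξ ^ 2) ^ (p / 2)) := by ring
            _ = M ^ 2 * (1 + ξ ^ 2) ^ p := by
                rw [← Real.rpow_add (by positivity)]
                norm_num
        have hnn : (‖b ξ‖₊ : ℝ≥0∞) ^ (2:ℝ) =
            ENNReal.ofReal ((μ ^ 2 * ξ ^ 2 / (1 + μ ^ 2 * ξ ^ 2)) ^ 2) * (‖F ξ‖₊ : ℝ≥0∞) ^ 2 := by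
          have h1 : ‖b ξ‖₊ = ‖(μ ^ 2 * ξ ^ 2 / (1 + μ ^ 2 * ξ ^ 2) : ℝ)‖₊ * ‖F ξ‖₊ := by
            simp only [hbdef, nnnorm_mul, Complex.nnnorm_real]
          rw [ENNReal.rpow_two, h1, ENNReal.coe_mul, mul_pow,
            ← enorm_eq_nnnorm (μ ^ 2 * ξ ^ 2 / (1 + μ ^ 2 * ξ ^ 2) : ℝ), Real.enorm_eq_ofReal hq0, ← ENNReal.ofReal_pow hq0]
        rw [hnn]
        calc ENNReal.ofReal ((μ ^ 2 * ξ ^ 2 / (1 + μ ^ 2 * ξ ^ 2)) ^ 2) * (‖F ξ‖₊ : ℝ≥0∞) ^ 2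
            ≤ ENNReal.ofReal (M ^ 2 * (1 + ξ ^ 2) ^ p) * (‖F ξ‖₊ : ℝ≥0∞) ^ 2 :=
              mul_le_mul_left (ENNReal.ofReal_le_ofReal hqle) _
          _ = ENNReal.ofReal (M ^ 2) *
              ((‖F ξ‖₊ : ℝ≥0∞) ^ 2 * ENNReal.ofReal ((1 + ξ ^ 2) ^ p)) := by
              rw [ENNReal.ofReal_mul (by positivity)]
              ring
      calc ∫⁻ ξ : ℝ, (‖b ξ‖₊ : ℝ≥0∞) ^ (2:ℝ)
          ≤ ∫⁻ ξ : ℝ, ENNReal.ofReal (M ^ 2) *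
              ((‖F ξ‖₊ : ℝ≥0∞) ^ 2 * ENNReal.ofReal ((1 + ξ ^ 2) ^ p)) :=
            lintegral_mono hle
        _ = ENNReal.ofReal (M ^ 2) *
            ∫⁻ ξ : ℝ, (‖F ξ‖₊ : ℝ≥0∞) ^ 2 * ENNReal.ofReal ((1 + ξ ^ 2) ^ p) :=
            lintegral_const_mul' _ _ ENNReal.ofReal_ne_top
        _ ≤ ENNReal.ofReal (M ^ 2) * ENNReal.ofReal (E ^ 2) := mul_le_mul_right hsob _
        _ = ENNReal.ofReal ((E * M) ^ 2) := by
            rw [← ENNReal.ofReal_mul (by positivity)]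
            ring_nf
    have heq : eLpNorm b 2 volume = (∫⁻ ξ : ℝ, (‖b ξ‖₊ : ℝ≥0∞) ^ (2:ℝ)) ^ (1/(2:ℝ)) := by
      rw [eLpNorm_eq_lintegral_rpow_enorm_toReal (by norm_num) (by norm_num)]
      norm_num
      rfl
    rw [heq]
    calc (∫⁻ ξ : ℝ, (‖b ξ‖₊ : ℝ≥0∞) ^ (2:ℝ)) ^ (1/(2:ℝ))
        ≤ (ENNReal.ofReal ((E * M) ^ 2)) ^ (1/(2:ℝ)) :=
          ENNReal.rpow_le_rpow hint (by norm_num)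
      _ = ENNReal.ofReal (E * M) := by
          rw [ENNReal.ofReal_pow hEM, ← ENNReal.rpow_natCast _ 2, ← ENNReal.rpow_mul]
          norm_num
  -- combine
  calc eLpNorm (b + n) 2 volume ≤ eLpNorm b 2 volume + eLpNorm n 2 volume :=
        eLpNorm_add_le hb_m hn_m (by norm_num)
    _ ≤ ENNReal.ofReal (E * M) + ENNReal.ofReal (C * δ) := add_le_add hbias_bd hnoise_bd
    _ = ENNReal.ofReal (C * δ + E * M) := by
        rw [← ENNReal.ofReal_add (by positivity) (by positivity)]
        ring_nf
end

section
/- Let a > 0, μ > 0 and c ∈ ℝ. Suppose w : ℝ → ℝ is twice differentiable on [0, ∞), bounded on [0, ∞), satisfies w(0) = 0, and satisfies −w''(y) + a² w(y) = (1 + μ²a²) c for all y ≥ 0. Then c = a² w(1)/((1 − e^{−a})(1 + μ²a²)). -/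
open Set Real

lemma const_on_Ici (f : ℝ → ℝ)
    (hf : ∀ y ∈ Set.Ici (0 : ℝ), HasDerivWithinAt f 0 (Set.Ici 0) y) :
    ∀ y ∈ Set.Ici (0 : ℝ), f y = f 0 := by
  intro y hy
  have hcont : ContinuousOn f (Icc 0 y) :=
    fun x hx => ((hf x hx.1).continuousWithinAt).mono (Icc_subset_Ici_self)
  exact constant_of_has_deriv_right_zero hcont
    (fun x hx => (hf x hx.1).mono (Ici_subset_Ici.mpr hx.1)) y ⟨hy, le_refl _⟩

/-- Per-frequency version of the regularized problem: let `a > 0`, `μ > 0`,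
`c ∈ ℝ`. If `w : ℝ → ℝ` is twice differentiable on `[0, ∞)` (with first
derivative `w'` and second derivative `w''` there), bounded on `[0, ∞)`,
satisfies `w 0 = 0` and `−w'' + a²w = (1 + μ²a²)c` on `[0, ∞)`, then
`c = a² w(1)/((1 − e^{−a})(1 + μ²a²))`. -/
theorem stmt_11 (a μ c : ℝ) (ha : 0 < a) (hμ : 0 < μ) (w w' w'' : ℝ → ℝ)
    (hw' : ∀ y ∈ Set.Ici (0 : ℝ), HasDerivWithinAt w (w' y) (Set.Ici 0) y)
    (hw'' : ∀ y ∈ Set.Ici (0 : ℝ), HasDerivWithinAt w' (w'' y) (Set.Ici 0) y)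
    (hbdd : ∃ M : ℝ, ∀ y ∈ Set.Ici (0 : ℝ), |w y| ≤ M)
    (h0 : w 0 = 0)
    (hode : ∀ y ∈ Set.Ici (0 : ℝ), -w'' y + a ^ 2 * w y = (1 + μ ^ 2 * a ^ 2) * c) :
    c = a ^ 2 * w 1 / ((1 - Real.exp (-a)) * (1 + μ ^ 2 * a ^ 2)) := by
  have ha' : a ≠ 0 := ne_of_gt ha
  set K := (1 + μ ^ 2 * a ^ 2) * c with hKdef
  have hK : ∀ y ∈ Set.Ici (0 : ℝ), w'' y = a ^ 2 * w y - K := by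
    intro y hy; have := hode y hy; linarith
  -- first integral: g y = e^{-ay}(w' y + a w y - K/a) is constant
  set g : ℝ → ℝ := fun y => Real.exp (-a * y) * (w' y + a * w y - K / a) with hgdef
  have hg : ∀ y ∈ Set.Ici (0 : ℝ), HasDerivWithinAt g 0 (Set.Ici 0) y := by
    intro y hy
    have h1 : HasDerivWithinAt (fun y => Real.exp (-a * y)) (-a * Real.exp (-a * y))
        (Set.Ici 0) y := by
      have h1' : HasDerivAt (fun y => Real.exp (-a * y)) (-a * Real.exp (-a * y)) y := by
        have := (Real.hasDerivAt_exp (-a * y)).comp y ((hasDerivAt_id y).const_mul (-a))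
        exact this.congr_deriv (by ring)
      exact h1'.hasDerivWithinAt
    have h2 : HasDerivWithinAt (fun y => w' y + a * w y - K / a) (w'' y + a * w' y)
        (Set.Ici 0) y := ((hw'' y hy).add ((hw' y hy).const_mul a)).sub_const _
    have := h1.mul h2
    refine this.congr_deriv ?_
    have := hK y hy
    rw [this]; field_simp; ring
  obtain ⟨k, hk⟩ : ∃ k, ∀ y ∈ Set.Ici (0 : ℝ),
      w' y + a * w y - K / a = k * Real.exp (a * y) := by
    refine ⟨w' 0 - K / a, fun y hy => ?_⟩
    have := const_on_Ici g hg y hy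
    simp only [hgdef, mul_zero, neg_zero, Real.exp_zero, one_mul, h0, neg_mul] at this
    have hE : Real.exp (-(a * y)) ≠ 0 := Real.exp_ne_zero _
    have h2 : Real.exp (-(a*y)) * Real.exp (a*y) = 1 := by
      rw [← Real.exp_add]; simp
    calc w' y + a * w y - K / a
        = Real.exp (a*y) * (Real.exp (-(a*y)) * (w' y + a * w y - K / a)) := by
          rw [← mul_assoc, mul_comm (Real.exp (a*y)), h2, one_mul]
      _ = Real.exp (a*y) * (w' 0 + a * 0 - K / a) := by rw [this]; ring
      _ = (w' 0 - K / a) * Real.exp (a * y) := by ring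
  -- second integral
  set h : ℝ → ℝ := fun y => Real.exp (a * y) * w y - K / a ^ 2 * Real.exp (a * y)
    - k / (2 * a) * Real.exp (2 * a * y) with hhdef
  have hh : ∀ y ∈ Set.Ici (0 : ℝ), HasDerivWithinAt h 0 (Set.Ici 0) y := by
    intro y hy
    have e1 : HasDerivWithinAt (fun y => Real.exp (a * y)) (a * Real.exp (a * y))
        (Set.Ici 0) y := by
      have e1' : HasDerivAt (fun y => Real.exp (a * y)) (a * Real.exp (a * y)) y := by
        have := (Real.hasDerivAt_exp (a * y)).comp y ((hasDerivAt_id y).const_mul a)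
        exact this.congr_deriv (by ring)
      exact e1'.hasDerivWithinAt
    have e2 : HasDerivWithinAt (fun y => Real.exp (2 * a * y)) (2 * a * Real.exp (2 * a * y))
        (Set.Ici 0) y := by
      have e2' : HasDerivAt (fun y => Real.exp (2 * a * y)) (2 * a * Real.exp (2 * a * y)) y := by
        have := (Real.hasDerivAt_exp (2 * a * y)).comp y ((hasDerivAt_id y).const_mul (2 * a))
        exact this.congr_deriv (by ring)
      exact e2'.hasDerivWithinAt
    have := ((e1.mul (hw' y hy)).sub (e1.const_mul (K / a ^ 2))).sub
      (e2.const_mul (k / (2 * a)))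
    refine this.congr_deriv ?_
    have hky := hk y hy
    have hE2 : Real.exp (2 * a * y) = Real.exp (a * y) * Real.exp (a * y) := by
      rw [← Real.exp_add]; ring_nf
    have : w' y = K / a + k * Real.exp (a * y) - a * w y := by linarith
    rw [hE2, this]
    field_simp
    ring
  have hwform : ∀ y ∈ Set.Ici (0 : ℝ),
      w y = K / a ^ 2 * (1 - Real.exp (-(a * y)))
        + k / (2 * a) * (Real.exp (a * y) - Real.exp (-(a * y))) := by
    intro y hy
    have hc := const_on_Ici h hh y hy
    simp only [hhdef, mul_zero, neg_zero, Real.exp_zero, one_mul, mul_one, h0] at hc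
    have h2 : Real.exp (-(a*y)) * Real.exp (a*y) = 1 := by
      rw [← Real.exp_add]; simp
    have hE2 : Real.exp (2 * a * y) = Real.exp (a * y) * Real.exp (a * y) := by
      rw [← Real.exp_add]; ring_nf
    have : Real.exp (a * y) * w y
        = K / a ^ 2 * (Real.exp (a * y) - 1) + k / (2 * a) * (Real.exp (2*a*y) - 1) := by
      linarith
    calc w y = Real.exp (-(a*y)) * (Real.exp (a*y) * w y) := by
          rw [← mul_assoc, h2, one_mul]
      _ = Real.exp (-(a*y)) * (K / a ^ 2 * (Real.exp (a * y) - 1)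
            + k / (2 * a) * (Real.exp (2*a*y) - 1)) := by rw [this]
      _ = K / a ^ 2 * (Real.exp (-(a*y)) * Real.exp (a*y) - Real.exp (-(a*y)))
            + k / (2 * a) * (Real.exp (-(a*y)) * Real.exp (a*y) * Real.exp (a*y)
              - Real.exp (-(a*y))) := by rw [hE2]; ring
      _ = _ := by rw [h2]; ring
  -- boundedness forces k = 0
  obtain ⟨M, hM⟩ := hbdd
  have hk0 : k = 0 := by
    by_contra hkne
    set C := M + |K| / a ^ 2 with hCdef
    have hbound : ∀ y ∈ Set.Ici (0 : ℝ),
        |k| / (2 * a) * (Real.exp (a * y) - Real.exp (-(a * y))) ≤ C := by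
      intro y hy
      have hwy := hwform y hy
      have h1 : |k / (2 * a) * (Real.exp (a * y) - Real.exp (-(a * y)))|
          ≤ |w y| + |K / a ^ 2 * (1 - Real.exp (-(a * y)))| := by
        have : k / (2 * a) * (Real.exp (a * y) - Real.exp (-(a * y)))
            = w y - K / a ^ 2 * (1 - Real.exp (-(a * y))) := by linarith
        rw [this]; exact (abs_sub _ _)
      have hyy : (0:ℝ) ≤ y := hy
      have hexp1 : Real.exp (-(a * y)) ≤ 1 := by
        apply Real.exp_le_one_iff.mpr; nlinarith
      have hexp0 : 0 < Real.exp (-(a * y)) := Real.exp_pos _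
      have h3 : |K / a ^ 2 * (1 - Real.exp (-(a * y)))| ≤ |K| / a ^ 2 := by
        rw [abs_mul, abs_div]
        have : |a ^ 2| = a ^ 2 := abs_of_pos (by positivity)
        rw [this]
        have : |1 - Real.exp (-(a * y))| ≤ 1 := by
          rw [abs_le]; constructor <;> nlinarith
        nlinarith [abs_nonneg K, sq_nonneg a, div_nonneg (abs_nonneg K) (sq_nonneg a)]
      have hge : Real.exp (-(a*y)) ≤ Real.exp (a*y) := by
        apply Real.exp_le_exp.mpr; nlinarith
      have habs : |k / (2 * a) * (Real.exp (a * y) - Real.exp (-(a * y)))|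
          = |k| / (2 * a) * (Real.exp (a * y) - Real.exp (-(a * y))) := by
        rw [abs_mul, abs_div, abs_of_nonneg (by linarith : (0:ℝ) ≤ Real.exp (a*y) - Real.exp (-(a*y)))]
        congr 1
        rw [abs_of_pos (by linarith : (0:ℝ) < 2 * a)]
      rw [habs] at h1
      have := hM y hy
      linarith
    have hkpos : 0 < |k| := abs_pos.mpr hkne
    have hC0 : 0 ≤ C := by
      have := hbound 0 Set.self_mem_Ici
      simp at this
      linarith
    set y₀ : ℝ := (2 * C + 2) / |k| with hy₀
    have hy₀pos : 0 ≤ y₀ := by positivity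
    have hlin : a * y₀ ≤ Real.exp (a * y₀) - Real.exp (-(a * y₀)) := by
      have h1 : a * y₀ + 1 ≤ Real.exp (a * y₀) := Real.add_one_le_exp _
      have h2 : Real.exp (-(a * y₀)) ≤ 1 := by
        apply Real.exp_le_one_iff.mpr; nlinarith
      linarith
    have := hbound y₀ (Set.mem_Ici.mpr hy₀pos)
    have hkey : |k| / (2 * a) * (a * y₀) ≤ C := by
      have hmono : |k| / (2 * a) * (a * y₀) ≤ |k| / (2 * a) * (Real.exp (a * y₀) - Real.exp (-(a * y₀))) := by
        apply mul_le_mul_of_nonneg_left hlin (by positivity)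
      linarith
    have hval : |k| / (2 * a) * (a * y₀) = C + 1 := by
      rw [hy₀]; field_simp
    linarith
  -- conclude
  have hw1 := hwform 1 (by norm_num)
  rw [hk0] at hw1
  simp only [zero_div, zero_mul, add_zero, mul_one] at hw1
  have hμa : (0:ℝ) < 1 + μ ^ 2 * a ^ 2 := by positivity
  have hexp : Real.exp (-a) < 1 := by
    apply Real.exp_lt_one_iff.mpr; linarith
  have hne : 1 - Real.exp (-a) ≠ 0 := by linarith
  rw [hw1, hKdef]
  field_simp
end
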